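/- Let H ⊆ {1,...,n}² be a board with area A = |H|, x-projection size u and y-projection size v, satisfying A ≥ c(u+v)² for some constant c > 0. Then there exists a ±1 assignment on H such that for all row/column switch settings, the discrepancy ∑_{(i,j)∈H} a_{ij} x_i y_j is at most c_1 · A^{3/4}, where c_1 = (2 ln 2)^{1/2} · c^{-1/4}. -/

import Mathlib

open scoped Classical

/-- ±1 indicator of a finset of pairs. -/
noncomputable def DBchi (T : Finset (ℕ × ℕ)) (p : ℕ × ℕ) : ℤ := if p ∈ T then 1 else -1

/-- ±1 indicator of a finset of naturals. -/
noncomputable def DBchi1 (P : Finset ℕ) (i : ℕ) : ℤ := if i ∈ P then 1 else -1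

lemma DBchi_pm (T : Finset (ℕ × ℕ)) (p : ℕ × ℕ) : DBchi T p = 1 ∨ DBchi T p = -1 := by
  unfold DBchi; split <;> simp

lemma DBchi1_pm (P : Finset ℕ) (i : ℕ) : DBchi1 P i = 1 ∨ DBchi1 P i = -1 := by
  unfold DBchi1; split <;> simp

/-- Chernoff-type counting bound for the plain sum. -/
lemma DBcount (H : Finset (ℕ × ℕ)) (lam t : ℝ) (ht : 0 ≤ t) :
    ((H.powerset.filter (fun T => lam < ((∑ p ∈ H, DBchi T p : ℤ) : ℝ))).card : ℝ)
      * Real.exp (t * lam)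
      ≤ (Real.exp t + Real.exp (-t)) ^ H.card := by
  have key : ∀ T ∈ H.powerset,
      Real.exp (t * ((∑ p ∈ H, DBchi T p : ℤ) : ℝ))
        = (∏ p ∈ T, Real.exp t) * ∏ p ∈ H \ T, Real.exp (-t) := by
    intro T hT
    rw [Finset.mem_powerset] at hT
    have : (((∑ p ∈ H, DBchi T p : ℤ)) : ℝ) = ∑ p ∈ H, ((DBchi T p : ℤ) : ℝ) := by
      push_cast; ring
    rw [this, Finset.mul_sum, Real.exp_sum]
    have : ∀ p ∈ H, Real.exp (t * ((DBchi T p : ℤ) : ℝ))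
        = (if p ∈ T then Real.exp t else Real.exp (-t)) := by
      intro p hp
      unfold DBchi; split <;> push_cast <;> ring_nf
    rw [Finset.prod_congr rfl this, Finset.prod_ite, Finset.prod_const, Finset.prod_const,
      Finset.prod_const, Finset.prod_const]
    congr 2
    · rw [Finset.filter_mem_eq_inter, Finset.inter_eq_right.mpr hT]
    · rw [Finset.sdiff_eq_filter]
  calc ((H.powerset.filter (fun T => lam < ((∑ p ∈ H, DBchi T p : ℤ) : ℝ))).card : ℝ)
        * Real.exp (t * lam)
      = ∑ _T ∈ H.powerset.filter (fun T => lam < ((∑ p ∈ H, DBchi T p : ℤ) : ℝ)),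
          Real.exp (t * lam) := by rw [Finset.sum_const, nsmul_eq_mul]
    _ ≤ ∑ T ∈ H.powerset.filter (fun T => lam < ((∑ p ∈ H, DBchi T p : ℤ) : ℝ)),
          Real.exp (t * ((∑ p ∈ H, DBchi T p : ℤ) : ℝ)) := by
        apply Finset.sum_le_sum
        intro T hT
        rw [Finset.mem_filter] at hT
        exact Real.exp_le_exp.mpr (mul_le_mul_of_nonneg_left hT.2.le ht)
    _ ≤ ∑ T ∈ H.powerset, Real.exp (t * ((∑ p ∈ H, DBchi T p : ℤ) : ℝ)) :=
        Finset.sum_le_sum_of_subset_of_nonneg (Finset.filter_subset _ _)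
          (fun _ _ _ => (Real.exp_pos _).le)
    _ = ∑ T ∈ H.powerset, (∏ p ∈ T, Real.exp t) * ∏ p ∈ H \ T, Real.exp (-t) :=
        Finset.sum_congr rfl key
    _ = ∏ _p ∈ H, (Real.exp t + Real.exp (-t)) := (Finset.prod_add _ _ _).symm
    _ = (Real.exp t + Real.exp (-t)) ^ H.card := Finset.prod_const _

/-- For each switch setting, the number of bad assignments equals the number for
the trivial setting, via symmetric difference with the set of negative cells. -/
lemma DBbij (H : Finset (ℕ × ℕ)) (lam : ℝ) (P Q : Finset ℕ) :
    (H.powerset.filter (fun T =>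
        lam < ((∑ p ∈ H, DBchi T p * DBchi1 P p.1 * DBchi1 Q p.2 : ℤ) : ℝ))).card
      = (H.powerset.filter (fun T => lam < ((∑ p ∈ H, DBchi T p : ℤ) : ℝ))).card := by
  set D : Finset (ℕ × ℕ) := H.filter (fun p => DBchi1 P p.1 * DBchi1 Q p.2 = -1) with hD
  have hDsub : D ⊆ H := Finset.filter_subset _ _
  have heps : ∀ p ∈ H, DBchi1 P p.1 * DBchi1 Q p.2 = (if p ∈ D then (-1 : ℤ) else 1) := by
    intro p hp
    by_cases h : p ∈ D
    · simp only [h, if_true]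
      exact (Finset.mem_filter.mp h).2
    · simp only [h, if_false]
      have h1 : ¬ (DBchi1 P p.1 * DBchi1 Q p.2 = -1) := by
        intro hx; exact h (Finset.mem_filter.mpr ⟨hp, hx⟩)
      unfold DBchi1 at h1 ⊢
      split_ifs at h1 ⊢ <;> simp_all
  have hkey : ∀ T, T ⊆ H → ∀ p ∈ H,
      DBchi (symmDiff T D) p * DBchi1 P p.1 * DBchi1 Q p.2 = DBchi T p := by
    intro T hT p hp
    rw [mul_assoc, heps p hp]
    have hmem : p ∈ symmDiff T D ↔ ((p ∈ T ∧ p ∉ D) ∨ (p ∈ D ∧ p ∉ T)) := by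
      exact Finset.mem_symmDiff
    unfold DBchi
    by_cases h1 : p ∈ T <;> by_cases h2 : p ∈ D <;>
      · simp only [hmem, h1, h2]
        norm_num
  have hsub : ∀ T, T ⊆ H → symmDiff T D ⊆ H := by
    intro T hT
    exact le_trans symmDiff_le_sup (sup_le hT hDsub)
  have hsd : ∀ T : Finset (ℕ × ℕ), symmDiff (symmDiff T D) D = T :=
    fun T => symmDiff_symmDiff_cancel_right D T
  symm
  apply Finset.card_nbij' (fun T => symmDiff T D) (fun T => symmDiff T D)
  · intro T hT
    rw [Finset.mem_coe, Finset.mem_filter, Finset.mem_powerset] at hT ⊢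
    refine ⟨hsub T hT.1, ?_⟩
    have : (∑ p ∈ H, DBchi (symmDiff T D) p * DBchi1 P p.1 * DBchi1 Q p.2)
        = ∑ p ∈ H, DBchi T p := Finset.sum_congr rfl (hkey T hT.1)
    rw [this]; exact hT.2
  · intro T hT
    rw [Finset.mem_coe, Finset.mem_filter, Finset.mem_powerset] at hT ⊢
    refine ⟨hsub T hT.1, ?_⟩
    have heq := Finset.sum_congr rfl (hkey (symmDiff T D) (hsub T hT.1))
    rw [hsd] at heq
    have h2 := hT.2
    rw [heq] at h2
    exact h2
  · intro T _; exact hsd T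
  · intro T _; exact hsd T

set_option maxHeartbeats 2000000 in
/-- Dense board upper bound: if `H ⊆ {1,…,n}²` has area `A = |H| ≥ c(u+v)²`,
where `u, v` are the projection sizes, then some `±1` assignment on `H` keeps
the discrepancy at most `(2 ln 2)^(1/2) c^(-1/4) · A^(3/4)` for all switch
settings. -/
theorem stmt_8 (n : ℕ) (H : Finset (ℕ × ℕ))
    (hH : H ⊆ Finset.Icc 1 n ×ˢ Finset.Icc 1 n)
    (c : ℝ) (hc : 0 < c)
    (hdense : c * ((H.image Prod.fst).card + (H.image Prod.snd).card : ℝ) ^ 2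
        ≤ (H.card : ℝ)) :
    ∃ a : ℕ × ℕ → ℤ, (∀ p ∈ H, a p = 1 ∨ a p = -1) ∧
      ∀ x y : ℕ → ℤ, (∀ i, x i = 1 ∨ x i = -1) → (∀ j, y j = 1 ∨ y j = -1) →
        ((∑ p ∈ H, a p * x p.1 * y p.2 : ℤ) : ℝ)
          ≤ Real.sqrt (2 * Real.log 2) * c ^ (-(1 : ℝ)/4)
              * (H.card : ℝ) ^ ((3 : ℝ)/4) := by
  classical
  by_cases hA0 : H.card = 0
  · refine ⟨fun _ => 1, fun p _ => Or.inl rfl, fun x y hx hy => ?_⟩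
    have hHe : H = ∅ := Finset.card_eq_zero.mp hA0
    rw [hHe]
    simp [Real.zero_rpow (by norm_num : ((3:ℝ)/4) ≠ 0)]
  -- Main case: A ≥ 1
  set U := H.image Prod.fst with hU
  set V := H.image Prod.snd with hV
  set A := H.card with hAdef
  set lam : ℝ := Real.sqrt (2 * Real.log 2) * c ^ (-(1 : ℝ)/4) * (A : ℝ) ^ ((3 : ℝ)/4)
    with hlamdef
  have hApos : (0 : ℝ) < (A : ℝ) := by
    have : 0 < A := Nat.pos_of_ne_zero hA0
    exact_mod_cast this
  have hlog2 : (0 : ℝ) < Real.log 2 := Real.log_pos one_lt_two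
  have hlampos : 0 < lam := by
    have h1 : 0 < Real.sqrt (2 * Real.log 2) := Real.sqrt_pos.mpr (by linarith)
    have h2 : 0 < c ^ (-(1 : ℝ)/4) := Real.rpow_pos_of_pos hc _
    have h3 : 0 < (A : ℝ) ^ ((3 : ℝ)/4) := Real.rpow_pos_of_pos hApos _
    rw [hlamdef]
    exact mul_pos (mul_pos h1 h2) h3
  have hHne : H.Nonempty := Finset.card_pos.mp (Nat.pos_of_ne_zero hA0)
  have hUne : U.Nonempty := hHne.image _
  obtain ⟨i0, hi0⟩ := hUne
  have hmemU : ∀ p ∈ H, p.1 ∈ U := fun p hp => Finset.mem_image.mpr ⟨p, hp, rfl⟩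
  have hmemV : ∀ p ∈ H, p.2 ∈ V := fun p hp => Finset.mem_image.mpr ⟨p, hp, rfl⟩
  -- the main claim
  have claim : ∃ T ∈ H.powerset, ∀ P Q : Finset ℕ,
      ((∑ p ∈ H, DBchi T p * DBchi1 P p.1 * DBchi1 Q p.2 : ℤ) : ℝ) ≤ lam := by
    by_contra hcon
    push_neg at hcon
    -- every assignment is bad for some normalized setting
    have hcover : H.powerset ⊆ ((U.erase i0).powerset ×ˢ V.powerset).biUnion
        (fun PQ => H.powerset.filter (fun T =>
          lam < ((∑ p ∈ H, DBchi T p * DBchi1 (insert i0 PQ.1) p.1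
            * DBchi1 PQ.2 p.2 : ℤ) : ℝ))) := by
      intro T hT
      obtain ⟨P, Q, hPQ⟩ := hcon T hT
      -- normalize to subsets of U, V
      have hnorm : ∀ P' Q' : Finset ℕ, (∀ p ∈ H, DBchi1 P' p.1 = DBchi1 P p.1) →
          (∀ p ∈ H, DBchi1 Q' p.2 = DBchi1 Q p.2) →
          lam < ((∑ p ∈ H, DBchi T p * DBchi1 P' p.1 * DBchi1 Q' p.2 : ℤ) : ℝ) := by
        intro P' Q' h1 h2
        have : (∑ p ∈ H, DBchi T p * DBchi1 P' p.1 * DBchi1 Q' p.2)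
            = ∑ p ∈ H, DBchi T p * DBchi1 P p.1 * DBchi1 Q p.2 := by
          refine Finset.sum_congr rfl fun p hp => by rw [h1 p hp, h2 p hp]
        rw [this]; exact hPQ
      set P1 := P ∩ U with hP1
      set Q1 := Q ∩ V with hQ1
      by_cases hi0P : i0 ∈ P1
      · refine Finset.mem_biUnion.mpr ⟨(P1.erase i0, Q1), ?_, ?_⟩
        · rw [Finset.mem_product]
          exact ⟨Finset.mem_powerset.mpr (Finset.erase_subset_erase _ Finset.inter_subset_right),
            Finset.mem_powerset.mpr Finset.inter_subset_right⟩
        · rw [Finset.mem_filter]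
          refine ⟨hT, ?_⟩
          have hins : insert i0 (P1.erase i0) = P1 := Finset.insert_erase hi0P
          rw [hins]
          apply hnorm
          · intro p hp
            have := hmemU p hp
            unfold DBchi1
            by_cases h : p.1 ∈ P <;> simp [hP1, Finset.mem_inter, h, this]
          · intro p hp
            have := hmemV p hp
            unfold DBchi1
            by_cases h : p.2 ∈ Q <;> simp [hQ1, Finset.mem_inter, h, this]
      · -- complement both sides
        have hi0c : i0 ∈ U \ P1 := Finset.mem_sdiff.mpr ⟨hi0, hi0P⟩
        refine Finset.mem_biUnion.mpr ⟨((U \ P1).erase i0, V \ Q1), ?_, ?_⟩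
        · rw [Finset.mem_product]
          exact ⟨Finset.mem_powerset.mpr (Finset.erase_subset_erase _ (Finset.sdiff_subset)),
            Finset.mem_powerset.mpr Finset.sdiff_subset⟩
        · rw [Finset.mem_filter]
          refine ⟨hT, ?_⟩
          have hins : insert i0 ((U \ P1).erase i0) = U \ P1 := Finset.insert_erase hi0c
          rw [hins]
          have key : ∀ p ∈ H, DBchi T p * DBchi1 (U \ P1) p.1 * DBchi1 (V \ Q1) p.2
              = DBchi T p * DBchi1 P p.1 * DBchi1 Q p.2 := by
            intro p hp
            have h1 : DBchi1 (U \ P1) p.1 = - DBchi1 P p.1 := by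
              have hpu := hmemU p hp
              unfold DBchi1
              by_cases h : p.1 ∈ P <;>
                simp [Finset.mem_sdiff, hP1, Finset.mem_inter, h, hpu]
            have h2 : DBchi1 (V \ Q1) p.2 = - DBchi1 Q p.2 := by
              have hpv := hmemV p hp
              unfold DBchi1
              by_cases h : p.2 ∈ Q <;>
                simp [Finset.mem_sdiff, hQ1, Finset.mem_inter, h, hpv]
            rw [h1, h2]; ring
          have : (∑ p ∈ H, DBchi T p * DBchi1 (U \ P1) p.1 * DBchi1 (V \ Q1) p.2)
              = ∑ p ∈ H, DBchi T p * DBchi1 P p.1 * DBchi1 Q p.2 :=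
            Finset.sum_congr rfl key
          rw [this]; exact hPQ
    -- count
    set N := (H.powerset.filter (fun T => lam < ((∑ p ∈ H, DBchi T p : ℤ) : ℝ))).card with hN
    have hcard : (2 : ℕ) ^ A ≤ 2 ^ (U.erase i0).card * 2 ^ V.card * N := by
      calc (2 : ℕ) ^ A = H.powerset.card := (Finset.card_powerset H).symm
        _ ≤ (((U.erase i0).powerset ×ˢ V.powerset).biUnion
            (fun PQ => H.powerset.filter (fun T =>
              lam < ((∑ p ∈ H, DBchi T p * DBchi1 (insert i0 PQ.1) p.1
                * DBchi1 PQ.2 p.2 : ℤ) : ℝ)))).card := Finset.card_le_card hcover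
        _ ≤ ∑ PQ ∈ (U.erase i0).powerset ×ˢ V.powerset,
            (H.powerset.filter (fun T =>
              lam < ((∑ p ∈ H, DBchi T p * DBchi1 (insert i0 PQ.1) p.1
                * DBchi1 PQ.2 p.2 : ℤ) : ℝ))).card := Finset.card_biUnion_le
        _ = ∑ _PQ ∈ (U.erase i0).powerset ×ˢ V.powerset, N := by
            refine Finset.sum_congr rfl fun PQ _ => ?_
            exact DBbij H lam (insert i0 PQ.1) PQ.2
        _ = 2 ^ (U.erase i0).card * 2 ^ V.card * N := by
            rw [Finset.sum_const, Finset.card_product, Finset.card_powerset,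
              Finset.card_powerset, smul_eq_mul]
    -- Chernoff bound on N
    set t : ℝ := lam / A with ht
    have htpos : 0 < t := div_pos hlampos hApos
    have hcosh : Real.exp t + Real.exp (-t) ≤ 2 * Real.exp (t ^ 2 / 2) := by
      have h1 := Real.cosh_le_exp_half_sq t
      rw [Real.cosh_eq] at h1
      linarith
    have hchern : (N : ℝ) ≤ 2 ^ A * Real.exp (-(lam ^ 2 / (2 * A))) := by
      have h1 := DBcount H lam t htpos.le
      have h2 : (Real.exp t + Real.exp (-t)) ^ A ≤ (2 * Real.exp (t ^ 2 / 2)) ^ A := by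
        apply pow_le_pow_left₀ (by positivity) hcosh _
      have h3 : (2 * Real.exp (t ^ 2 / 2)) ^ A = 2 ^ A * Real.exp (A * (t ^ 2 / 2)) := by
        rw [mul_pow, ← Real.exp_nat_mul]
      have h4 : (N : ℝ) * Real.exp (t * lam) ≤ 2 ^ A * Real.exp (A * (t ^ 2 / 2)) := by
        calc (N : ℝ) * Real.exp (t * lam) ≤ (Real.exp t + Real.exp (-t)) ^ A := h1
          _ ≤ (2 * Real.exp (t ^ 2 / 2)) ^ A := h2
          _ = 2 ^ A * Real.exp (A * (t ^ 2 / 2)) := h3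
      have hAne : (A : ℝ) ≠ 0 := ne_of_gt hApos
      have hexp : A * (t ^ 2 / 2) - t * lam = -(lam ^ 2 / (2 * A)) := by
        rw [ht]; field_simp; ring
      have h5 : (N : ℝ) ≤ 2 ^ A * Real.exp (A * (t ^ 2 / 2)) / Real.exp (t * lam) := by
        rw [le_div_iff₀ (Real.exp_pos _)]; exact h4
      calc (N : ℝ) ≤ 2 ^ A * Real.exp (A * (t ^ 2 / 2)) / Real.exp (t * lam) := h5
        _ = 2 ^ A * Real.exp (A * (t ^ 2 / 2) - t * lam) := by
            rw [Real.exp_sub]; ring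
        _ = 2 ^ A * Real.exp (-(lam ^ 2 / (2 * A))) := by rw [hexp]
    -- lam is large enough
    have hlamsq : 2 * (A : ℝ) * Real.log 2 * ((U.card : ℝ) + V.card) ≤ lam ^ 2 := by
      have hs : (0 : ℝ) ≤ (U.card : ℝ) + V.card := by positivity
      have hsqA : Real.sqrt c * ((U.card : ℝ) + V.card) ≤ Real.sqrt A := by
        have h1 : Real.sqrt (c * ((U.card : ℝ) + V.card) ^ 2) ≤ Real.sqrt A :=
          Real.sqrt_le_sqrt hdense
        rwa [Real.sqrt_mul hc.le, Real.sqrt_sq hs] at h1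
      have hcinv : c ^ (-(1 : ℝ)/2) * Real.sqrt c = 1 := by
        rw [Real.sqrt_eq_rpow, ← Real.rpow_add hc]
        norm_num
      have hkey : ((U.card : ℝ) + V.card) ≤ c ^ (-(1 : ℝ)/2) * Real.sqrt A := by
        have hcp : (0 : ℝ) < c ^ (-(1 : ℝ)/2) := Real.rpow_pos_of_pos hc _
        calc ((U.card : ℝ) + V.card) = c ^ (-(1 : ℝ)/2) * (Real.sqrt c * ((U.card : ℝ) + V.card)) := by
              rw [← mul_assoc, hcinv, one_mul]
          _ ≤ c ^ (-(1 : ℝ)/2) * Real.sqrt A := by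
              exact mul_le_mul_of_nonneg_left hsqA hcp.le
      have hlam2 : lam ^ 2 = 2 * Real.log 2 * c ^ (-(1 : ℝ)/2) * ((A : ℝ) * Real.sqrt A) := by
        rw [hlamdef]
        rw [mul_pow, mul_pow, Real.sq_sqrt (by linarith : (0:ℝ) ≤ 2 * Real.log 2)]
        have e1 : (c ^ (-(1 : ℝ)/4)) ^ 2 = c ^ (-(1 : ℝ)/2) := by
          rw [← Real.rpow_natCast (c ^ (-(1 : ℝ)/4)) 2, ← Real.rpow_mul hc.le]
          norm_num
        have e2 : ((A : ℝ) ^ ((3 : ℝ)/4)) ^ 2 = (A : ℝ) * Real.sqrt A := by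
          rw [← Real.rpow_natCast ((A : ℝ) ^ ((3 : ℝ)/4)) 2, ← Real.rpow_mul hApos.le]
          rw [Real.sqrt_eq_rpow]
          rw [show ((3 : ℝ)/4 * (2 : ℕ)) = 1 + 1/2 by push_cast; norm_num]
          rw [Real.rpow_add hApos, Real.rpow_one]
        rw [e1, e2]
      rw [hlam2]
      calc 2 * (A : ℝ) * Real.log 2 * ((U.card : ℝ) + V.card)
          ≤ 2 * (A : ℝ) * Real.log 2 * (c ^ (-(1 : ℝ)/2) * Real.sqrt A) := by
            apply mul_le_mul_of_nonneg_left hkey (by positivity)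
        _ = 2 * Real.log 2 * c ^ (-(1 : ℝ)/2) * ((A : ℝ) * Real.sqrt A) := by ring
    have hexp2 : Real.exp (-(lam ^ 2 / (2 * A))) ≤ ((2 : ℝ) ^ (U.card + V.card))⁻¹ := by
      have h1 : ((2 : ℝ) ^ (U.card + V.card)) = Real.exp (((U.card + V.card : ℕ) : ℝ) * Real.log 2) := by
        rw [Real.exp_nat_mul, Real.exp_log (by norm_num : (0:ℝ) < 2)]
      rw [h1, ← Real.exp_neg, Real.exp_le_exp]
      rw [neg_le_neg_iff]
      rw [le_div_iff₀ (by positivity : (0:ℝ) < 2 * A)]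
      calc ((U.card + V.card : ℕ) : ℝ) * Real.log 2 * (2 * A)
          = 2 * (A : ℝ) * Real.log 2 * ((U.card : ℝ) + V.card) := by push_cast; ring
        _ ≤ lam ^ 2 := hlamsq
    -- final contradiction
    have hu1 : 1 ≤ U.card := Finset.card_pos.mpr ⟨i0, hi0⟩
    have hcardR : ((2 : ℝ) ^ A) ≤ 2 ^ (U.card - 1) * 2 ^ V.card * N := by
      have := hcard
      have herase : (U.erase i0).card = U.card - 1 := Finset.card_erase_of_mem hi0
      rw [herase] at this
      exact_mod_cast this
    have hfin : ((2 : ℝ) ^ A) ≤ (2 : ℝ) ^ A * 2⁻¹ := by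
      have hNbound : (N : ℝ) ≤ 2 ^ A * ((2 : ℝ) ^ (U.card + V.card))⁻¹ :=
        hchern.trans (mul_le_mul_of_nonneg_left hexp2 (by positivity))
      have hc2 : (2 : ℝ) ^ (U.card - 1) * 2 ^ V.card * ((2 : ℝ) ^ (U.card + V.card))⁻¹
          = 2⁻¹ := by
        rw [← pow_add]
        rw [show U.card + V.card = (U.card - 1 + V.card) + 1 by omega]
        rw [pow_succ]
        field_simp
      calc ((2 : ℝ) ^ A) ≤ 2 ^ (U.card - 1) * 2 ^ V.card * N := hcardR
        _ ≤ 2 ^ (U.card - 1) * 2 ^ V.card * (2 ^ A * ((2 : ℝ) ^ (U.card + V.card))⁻¹) := by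
            apply mul_le_mul_of_nonneg_left hNbound (by positivity)
        _ = (2 : ℝ) ^ A * (2 ^ (U.card - 1) * 2 ^ V.card * ((2 : ℝ) ^ (U.card + V.card))⁻¹) := by
            ring
        _ = (2 : ℝ) ^ A * 2⁻¹ := by rw [hc2]
    have hp2 : (0 : ℝ) < 2 ^ A := by positivity
    nlinarith [hfin, hp2]
  -- conclude
  obtain ⟨T, hTH, hTgood⟩ := claim
  refine ⟨DBchi T, fun p _ => DBchi_pm T p, fun x y hx hy => ?_⟩
  set P : Finset ℕ := U.filter (fun i => x i = 1) with hP
  set Q : Finset ℕ := V.filter (fun j => y j = 1) with hQ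
  have hxP : ∀ p ∈ H, x p.1 = DBchi1 P p.1 := by
    intro p hp
    have hpu := hmemU p hp
    rcases hx p.1 with h | h
    · have : p.1 ∈ P := Finset.mem_filter.mpr ⟨hpu, h⟩
      rw [h]; unfold DBchi1; rw [if_pos this]
    · have : p.1 ∉ P := by
        intro hmem
        have := (Finset.mem_filter.mp hmem).2
        rw [h] at this; norm_num at this
      rw [h]; unfold DBchi1; rw [if_neg this]
  have hyQ : ∀ p ∈ H, y p.2 = DBchi1 Q p.2 := by
    intro p hp
    have hpv := hmemV p hp
    rcases hy p.2 with h | h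
    · have : p.2 ∈ Q := Finset.mem_filter.mpr ⟨hpv, h⟩
      rw [h]; unfold DBchi1; rw [if_pos this]
    · have : p.2 ∉ Q := by
        intro hmem
        have := (Finset.mem_filter.mp hmem).2
        rw [h] at this; norm_num at this
      rw [h]; unfold DBchi1; rw [if_neg this]
  have heq : (∑ p ∈ H, DBchi T p * x p.1 * y p.2)
      = ∑ p ∈ H, DBchi T p * DBchi1 P p.1 * DBchi1 Q p.2 :=
    Finset.sum_congr rfl fun p hp => by rw [hxP p hp, hyQ p hp]
  rw [heq]
  exact hTgood P Q
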